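/- Let x(k+1) = A(k)x(k) be a non-singular N-periodic linear system over a finite field, with N prime. Then every periodic orbit containing a point outside 𝒜 = ⋂_{i<j} ker(A(i) − A(j)) has period divisible by N. -/

import Mathlib

open Matrix

theorem pfss_prime_period_orbit_outside_A_dvd
    (F : Type*) [Field F] [Fintype F] (n N : ℕ) (hNp : N.Prime)
    (A : ℕ → Matrix (Fin n) (Fin n) F)
    (hper : ∀ k, A (k + N) = A k)
    (hns : ∀ k, IsUnit (A k))
    (x : ℕ → (Fin n → F)) (hx : ∀ k, x (k + 1) = (A k) *ᵥ x k)
    (T : ℕ) (hT : 0 < T) (hTper : ∀ k, x (k + T) = x k)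
    (hTmin : ∀ T' > 0, (∀ k, x (k + T') = x k) → T ≤ T')
    (hout : ∃ k0, ¬ (∀ i j, i < j → j < N → (A i - A j) *ᵥ x k0 = 0)) :
    N ∣ T := by
  by_contra hND
  obtain ⟨k0, hk0⟩ := hout
  apply hk0
  intro i j hij hjN
  haveI : Fact N.Prime := ⟨hNp⟩
  have hAmul : ∀ q r, A (r + q * N) = A r := by
    intro q
    induction q with
    | zero => simp
    | succ q ih =>
      intro r
      have h : r + (q + 1) * N = (r + q * N) + N := by ring
      rw [h, hper, ih]
  have hA : ∀ a b : ℕ, (a : ZMod N) = (b : ZMod N) → A a = A b := by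
    intro a b h
    have h' : a % N = b % N := by
      rwa [ZMod.natCast_eq_natCast_iff, Nat.ModEq] at h
    have ha : A a = A (a % N) := by
      conv_lhs => rw [← Nat.mod_add_div' a N]
      rw [hAmul]
    have hb : A b = A (b % N) := by
      conv_lhs => rw [← Nat.mod_add_div' b N]
      rw [hAmul]
    rw [ha, hb, h']
  have hxm : ∀ m k, x (k + m * T) = x k := by
    intro m
    induction m with
    | zero => simp
    | succ m ih =>
      intro k
      have h : k + (m + 1) * T = (k + m * T) + T := by ring
      rw [h, hTper, ih]
  have key : ∀ m, A (k0 + m * T) *ᵥ x k0 = x (k0 + 1) := by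
    intro m
    calc A (k0 + m * T) *ᵥ x k0 = A (k0 + m * T) *ᵥ x (k0 + m * T) := by rw [hxm]
    _ = x (k0 + m * T + 1) := (hx _).symm
    _ = x ((k0 + 1) + m * T) := by ring_nf
    _ = x (k0 + 1) := hxm m _
  have hTne : (T : ZMod N) ≠ 0 := by
    simpa [ZMod.natCast_eq_zero_iff] using hND
  have main : ∀ c : ℕ, A c *ᵥ x k0 = x (k0 + 1) := by
    intro c
    set m : ℕ := (((c : ZMod N) - (k0 : ZMod N)) * (T : ZMod N)⁻¹).val with hm
    have hcast : ((k0 + m * T : ℕ) : ZMod N) = (c : ZMod N) := by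
      push_cast
      rw [hm, ZMod.natCast_val, ZMod.cast_id]
      field_simp
      ring
    rw [hA c (k0 + m * T) hcast.symm]
    exact key m
  have : (A i - A j) *ᵥ x k0 = A i *ᵥ x k0 - A j *ᵥ x k0 := Matrix.sub_mulVec _ _ _
  rw [this, main i, main j, sub_self]
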